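/- Let K be an algebraically closed field complete with respect to a valuation v with v(p)=1, and let p be a prime. Let A, B, C, D ∈ K with v(A) ≥ p, v(B) = p/(p+1), v(C) = 1 + p²/(p+1), v(D) = 1. Then every root y of the polynomial y^{p²+1} − (D/B)·y^{p²} + (A/B)·y − (C/B) satisfies v(y) = 1/(p+1). -/

import Mathlib

open scoped NNReal

/-- Newton polygon computation (f = 2 case): over an algebraically closed complete valued
field `K` with valuation normalized by `v(p) = 1`, if `v(A) ≥ p`, `v(B) = p/(p+1)`,
`v(C) = 1 + p²/(p+1)` and `v(D) = 1`, then every root `y` of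
`y^{p²+1} − (D/B)·y^{p²} + (A/B)·y − (C/B)` satisfies `v(y) = 1/(p+1)`. -/
theorem root_valuation_critical_f_two
    {p : ℕ} (hp : p.Prime)
    (K : Type*) [Field K] [Valued K ℝ≥0] [CompleteSpace K] [IsAlgClosed K]
    (hvp : Valued.v (p : K) = ((p : ℝ≥0))⁻¹)
    (A B C D : K)
    (hA : Valued.v A ≤ (p : ℝ≥0) ^ (-(p : ℝ)))
    (hB : Valued.v B = (p : ℝ≥0) ^ (-((p : ℝ) / ((p : ℝ) + 1))))
    (hC : Valued.v C = (p : ℝ≥0) ^ (-(1 + (p : ℝ) ^ 2 / ((p : ℝ) + 1))))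
    (hD : Valued.v D = (p : ℝ≥0) ^ (-1 : ℝ))
    (y : K)
    (hy : y ^ (p ^ 2 + 1) - (D / B) * y ^ (p ^ 2) + (A / B) * y - C / B = 0) :
    Valued.v y = (p : ℝ≥0) ^ (-(1 / ((p : ℝ) + 1))) := by
  have v := (Valued.v : Valuation K ℝ≥0)
  have hp0 : (p : ℝ≥0) ≠ 0 := Nat.cast_ne_zero.mpr hp.pos.ne'
  have hppos : (0 : ℝ≥0) < (p : ℝ≥0) := pos_iff_ne_zero.mpr hp0
  have hq : ((p : ℝ) + 1) ≠ 0 := by positivity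
  set t : ℝ≥0 := (p : ℝ≥0) ^ (-(1 / ((p : ℝ) + 1))) with htdef
  have ht : 0 < t := NNReal.rpow_pos hppos
  have tpow : ∀ n : ℕ, t ^ n = (p : ℝ≥0) ^ (-(1 / ((p : ℝ) + 1)) * (n : ℝ)) := by
    intro n
    rw [htdef, ← NNReal.rpow_natCast ((p : ℝ≥0) ^ (-(1 / ((p : ℝ) + 1)))) n,
      ← NNReal.rpow_mul]
  have hDB : Valued.v (D / B) = t := by
    rw [map_div₀, hD, hB, ← NNReal.rpow_sub hp0, htdef]
    congr 1
    field_simp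
    ring
  have hCB : Valued.v (C / B) = t ^ (p ^ 2 + 1) := by
    rw [map_div₀, hC, hB, ← NNReal.rpow_sub hp0, tpow]
    congr 1
    push_cast
    field_simp
    ring
  have hAB : Valued.v (A / B) ≤ t ^ (p ^ 2) := by
    rw [map_div₀, hB]
    have h1 : ((p : ℝ≥0) ^ (-(p : ℝ))) / (p : ℝ≥0) ^ (-((p : ℝ) / ((p : ℝ) + 1)))
        = t ^ (p ^ 2) := by
      rw [← NNReal.rpow_sub hp0, tpow]
      congr 1
      push_cast
      field_simp
      ring
    rw [← h1]
    gcongr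
  have hpsq : p ^ 2 ≠ 0 := pow_ne_zero 2 hp.pos.ne'
  have hn : p ^ 2 + 1 ≠ 0 := Nat.succ_ne_zero _
  rcases lt_trichotomy (Valued.v y) t with hlt | heq | hgt
  · exfalso
    have hE : Valued.v (y ^ (p ^ 2 + 1) - (D / B) * y ^ (p ^ 2) + (A / B) * y)
        = t ^ (p ^ 2 + 1) := by
      have hrw : y ^ (p ^ 2 + 1) - (D / B) * y ^ (p ^ 2) + (A / B) * y = C / B := by
        linear_combination hy
      rw [hrw, hCB]
    have h1 : Valued.v (y ^ (p ^ 2 + 1)) < t ^ (p ^ 2 + 1) := by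
      rw [map_pow]
      exact pow_lt_pow_left₀ hlt zero_le hn
    have h2 : Valued.v ((D / B) * y ^ (p ^ 2)) < t ^ (p ^ 2 + 1) := by
      have e : t ^ (p ^ 2 + 1) = t * t ^ (p ^ 2) := by ring
      rw [map_mul, map_pow, hDB, e]
      exact mul_lt_mul_of_pos_left (pow_lt_pow_left₀ hlt zero_le hpsq) ht
    have h3 : Valued.v ((A / B) * y) < t ^ (p ^ 2 + 1) := by
      rw [map_mul]
      calc Valued.v (A / B) * Valued.v y ≤ t ^ (p ^ 2) * Valued.v y := by gcongr
        _ < t ^ (p ^ 2) * t := mul_lt_mul_of_pos_left hlt (pow_pos ht _)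
        _ = t ^ (p ^ 2 + 1) := (pow_succ t _).symm
    have hle : Valued.v (y ^ (p ^ 2 + 1) - (D / B) * y ^ (p ^ 2) + (A / B) * y)
        ≤ max (max (Valued.v (y ^ (p ^ 2 + 1))) (Valued.v ((D / B) * y ^ (p ^ 2))))
            (Valued.v ((A / B) * y)) :=
      le_trans (Valued.v.map_add _ _) (max_le_max (Valued.v.map_sub _ _) le_rfl)
    rw [hE] at hle
    exact absurd (lt_of_le_of_lt hle (max_lt (max_lt h1 h2) h3)) (lt_irrefl _)
  · exact heq
  · exfalso
    have hrw : y ^ (p ^ 2 + 1) = (D / B) * y ^ (p ^ 2) - (A / B) * y + C / B := by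
      linear_combination hy
    have hrpos : 0 < Valued.v y := lt_trans ht hgt
    have h1 : Valued.v ((D / B) * y ^ (p ^ 2)) < Valued.v y ^ (p ^ 2 + 1) := by
      have e : Valued.v y ^ (p ^ 2 + 1) = Valued.v y * Valued.v y ^ (p ^ 2) := by ring
      rw [map_mul, map_pow, hDB, e]
      exact mul_lt_mul_of_pos_right hgt (pow_pos hrpos _)
    have h2 : Valued.v ((A / B) * y) < Valued.v y ^ (p ^ 2 + 1) := by
      rw [map_mul]
      calc Valued.v (A / B) * Valued.v y ≤ t ^ (p ^ 2) * Valued.v y := by gcongr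
        _ < Valued.v y ^ (p ^ 2) * Valued.v y :=
          mul_lt_mul_of_pos_right (pow_lt_pow_left₀ hgt zero_le hpsq) hrpos
        _ = Valued.v y ^ (p ^ 2 + 1) := (pow_succ _ _).symm
    have h3 : Valued.v (C / B) < Valued.v y ^ (p ^ 2 + 1) := by
      rw [hCB]
      exact pow_lt_pow_left₀ hgt zero_le hn
    have hle : Valued.v (y ^ (p ^ 2 + 1))
        ≤ max (max (Valued.v ((D / B) * y ^ (p ^ 2))) (Valued.v ((A / B) * y)))
            (Valued.v (C / B)) := by
      rw [hrw]
      exact le_trans (Valued.v.map_add _ _) (max_le_max (Valued.v.map_sub _ _) le_rfl)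
    rw [map_pow] at hle
    exact absurd (lt_of_le_of_lt hle (max_lt (max_lt h1 h2) h3)) (lt_irrefl _)
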